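/- Let F be a distribution function and α > 0. There exist aₙ > 0 and bₙ ∈ ℝ such that F^{⊡n}(aₙ·x + bₙ) → B_α(x) as n → ∞ for every x ∈ ℝ, if and only if there exist aₙ > 0 and bₙ ∈ ℝ such that F(aₙ·x + bₙ)^n → Ψ_α(x) as n → ∞ for every x ∈ ℝ, where Ψ_α(x) = exp(−|x|^α) for x ≤ 0 and Ψ_α(x) = 1 for x > 0. In other words, the free max-domain of attraction of the Beta law B_α coincides with the classical max-domain of attraction of the Weibull distribution Ψ_α. -/

import Mathlib

open Filter Topology

def IsDistFun (F : ℝ → ℝ) : Prop :=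
  Monotone F ∧ (∀ x, ContinuousWithinAt F (Set.Ici x) x) ∧
    Tendsto F atBot (𝓝 0) ∧ Tendsto F atTop (𝓝 1)

noncomputable def freePow (F : ℝ → ℝ) (n : ℕ) (x : ℝ) : ℝ :=
  max ((n : ℝ) * F x - ((n : ℝ) - 1)) 0

noncomputable def betaDF (α : ℝ) (x : ℝ) : ℝ :=
  if x ≤ -1 then 0 else if x ≤ 0 then 1 - |x| ^ α else 1

/-- The Weibull distribution function. -/
noncomputable def weibullDF (α : ℝ) (x : ℝ) : ℝ :=
  if x ≤ 0 then Real.exp (-|x| ^ α) else 1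

section FreeExtremeAux

private lemma fe_log_one_sub_le {u : ℝ} (h1 : u < 1) : Real.log (1 - u) ≤ -u := by
  have := Real.log_le_sub_one_of_pos (x := 1 - u) (by linarith)
  linarith

private lemma fe_neg_log_one_sub_mul_le {u : ℝ} (h0 : 0 ≤ u) (h1 : u < 1) :
    (-Real.log (1 - u)) * (1 - u) ≤ u := by
  have hpos : (0:ℝ) < 1 - u := by linarith
  have h2 := Real.log_le_sub_one_of_pos (x := (1 - u)⁻¹) (by positivity)
  rw [Real.log_inv] at h2
  have h3 : -Real.log (1 - u) ≤ (1 - u)⁻¹ - 1 := by linarith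
  calc (-Real.log (1 - u)) * (1 - u) ≤ ((1 - u)⁻¹ - 1) * (1 - u) := by
        apply mul_le_mul_of_nonneg_right h3 hpos.le
    _ = u := by field_simp; ring

/-- If `n * uₙ → c` with `uₙ ≥ 0` then `(1-uₙ)^n → exp (-c)`. -/
private lemma fe_pow_one_sub_tendsto_exp {u : ℕ → ℝ} {c : ℝ} (h0 : ∀ n, 0 ≤ u n)
    (h : Tendsto (fun n : ℕ => (n : ℝ) * u n) atTop (𝓝 c)) :
    Tendsto (fun n => (1 - u n) ^ n) atTop (𝓝 (Real.exp (-c))) := by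
  have hu0 : Tendsto u atTop (𝓝 0) := by
    have h1 : Tendsto (fun n : ℕ => ((n : ℝ) * u n) * ((n:ℝ))⁻¹) atTop (𝓝 (c * 0)) :=
      h.mul tendsto_inv_atTop_nhds_zero_nat
    rw [mul_zero] at h1
    apply h1.congr'
    filter_upwards [eventually_ge_atTop 1] with n hn
    have : (n:ℝ) ≠ 0 := Nat.cast_ne_zero.2 (by omega)
    field_simp
  have hsmall : ∀ᶠ n in atTop, u n < 1/2 := hu0.eventually_lt_const (by norm_num)
  have hv : Tendsto (fun n : ℕ => -((n:ℝ) * Real.log (1 - u n))) atTop (𝓝 c) := by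
    have hupper : Tendsto (fun n : ℕ => ((n:ℝ) * u n) * (1 - u n)⁻¹) atTop
        (𝓝 (c * (1 - 0)⁻¹)) :=
      h.mul (((tendsto_const_nhds).sub hu0).inv₀ (by norm_num))
    rw [show c * ((1:ℝ) - 0)⁻¹ = c by norm_num] at hupper
    apply tendsto_of_tendsto_of_tendsto_of_le_of_le' h hupper
    · filter_upwards [hsmall] with n hn
      have := fe_log_one_sub_le (u := u n) (by linarith)
      have hn0 : (0:ℝ) ≤ n := Nat.cast_nonneg n
      nlinarith
    · filter_upwards [hsmall] with n hn
      have h2 := fe_neg_log_one_sub_mul_le (h0 n) (by linarith : u n < 1)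
      have hn0 : (0:ℝ) ≤ n := Nat.cast_nonneg n
      have hpos : (0:ℝ) < 1 - u n := by linarith
      rw [mul_comm, ← div_eq_mul_inv, le_div_iff₀ hpos]
      nlinarith
  have := (Real.continuous_exp.tendsto _).comp (hv.neg)
  simp only [Function.comp_def] at this
  apply this.congr'
  filter_upwards [hsmall] with n hn
  have hpos : (0:ℝ) < 1 - u n := by linarith
  simp only [Function.comp, neg_neg]
  rw [Real.exp_nat_mul, Real.exp_log hpos]

/-- If `Gₙ^n → L > 0` with `0 ≤ Gₙ ≤ 1` then `n (1 - Gₙ) → - log L`. -/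
private lemma fe_mul_one_sub_tendsto_of_pow {G : ℕ → ℝ} {L : ℝ}
    (h0 : ∀ n, 0 ≤ G n) (h1 : ∀ n, G n ≤ 1)
    (h : Tendsto (fun n => G n ^ n) atTop (𝓝 L)) (hL : 0 < L) :
    Tendsto (fun n : ℕ => (n : ℝ) * (1 - G n)) atTop (𝓝 (-Real.log L)) := by
  have hev : ∀ᶠ n : ℕ in atTop, 0 < G n := by
    filter_upwards [h.eventually_const_lt (show L/2 < L by linarith), eventually_ge_atTop 1]
      with n hn hn1
    by_contra hc
    push_neg at hc
    have : G n = 0 := le_antisymm hc (h0 n)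
    rw [this, zero_pow (by omega)] at hn
    linarith
  have hw : Tendsto (fun n : ℕ => (n:ℝ) * Real.log (G n)) atTop (𝓝 (Real.log L)) := by
    have := ((Real.continuousAt_log hL.ne').tendsto).comp h
    simp only [Function.comp_def] at this
    apply this.congr
    intro n
    simp [Real.log_pow]
  have hlog0 : Tendsto (fun n : ℕ => Real.log (G n)) atTop (𝓝 0) := by
    have h1' : Tendsto (fun n : ℕ => ((n:ℝ) * Real.log (G n)) * ((n:ℝ))⁻¹) atTop
        (𝓝 (Real.log L * 0)) := hw.mul tendsto_inv_atTop_nhds_zero_nat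
    rw [mul_zero] at h1'
    apply h1'.congr'
    filter_upwards [eventually_ge_atTop 1] with n hn
    have : (n:ℝ) ≠ 0 := Nat.cast_ne_zero.2 (by omega)
    field_simp
  have hG1 : Tendsto G atTop (𝓝 1) := by
    have := (Real.continuous_exp.tendsto _).comp hlog0
    simp only [Function.comp, Real.exp_zero] at this
    apply this.congr'
    filter_upwards [hev] with n hn
    simp [Real.exp_log hn]
  have hsmall : ∀ᶠ n : ℕ in atTop, 1/2 < G n := hG1.eventually_const_lt (by norm_num)
  have hlower : Tendsto (fun n : ℕ => G n * (-((n:ℝ) * Real.log (G n)))) atTop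
      (𝓝 (1 * (-Real.log L))) := hG1.mul hw.neg
  rw [one_mul] at hlower
  apply tendsto_of_tendsto_of_tendsto_of_le_of_le' hlower hw.neg
  · filter_upwards [hsmall] with n hn
    have h2 := fe_neg_log_one_sub_mul_le (u := 1 - G n) (by linarith [h1 n]) (by linarith)
    have hn0 : (0:ℝ) ≤ n := Nat.cast_nonneg n
    have h3 : (1 : ℝ) - (1 - G n) = G n := by ring
    rw [h3] at h2
    nlinarith
  · filter_upwards [hsmall] with n hn
    have h2 := fe_log_one_sub_le (u := 1 - G n) (by linarith)
    have hn0 : (0:ℝ) ≤ n := Nat.cast_nonneg n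
    have h3 : (1 : ℝ) - (1 - G n) = G n := by ring
    rw [h3] at h2
    nlinarith

/-- Comparison lemma. -/
private lemma fe_eventually_lt_of_tail {U : ℝ → ℝ} (hU : Antitone U) {p q : ℕ → ℝ} {c₁ c₂ : ℝ}
    (hp : Tendsto (fun n : ℕ => (n:ℝ) * U (p n)) atTop (𝓝 c₁))
    (hq : Tendsto (fun n : ℕ => (n:ℝ) * U (q n)) atTop (𝓝 c₂)) (h : c₁ < c₂) :
    ∀ᶠ n in atTop, q n < p n := by
  filter_upwards [hp.eventually_lt_const (show c₁ < (c₁+c₂)/2 by linarith),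
    hq.eventually_const_lt (show (c₁+c₂)/2 < c₂ by linarith)] with n h1 h2
  by_contra hc
  push_neg at hc
  have := hU hc
  have hn0 : (0:ℝ) ≤ n := Nat.cast_nonneg n
  nlinarith

private lemma fe_rpow_inv_rpow {s α : ℝ} (hs : 0 ≤ s) (hα : 0 < α) : (s ^ α⁻¹) ^ α = s := by
  rw [← Real.rpow_mul hs, inv_mul_cancel₀ hα.ne', Real.rpow_one]

/-- Location lemma. -/
private lemma fe_tendsto_loc {U : ℝ → ℝ} (hU : Antitone U) {a b : ℕ → ℝ} (ha : ∀ n, 0 < a n)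
    {α : ℝ} (hα : 0 < α)
    (H : ∀ y ∈ Set.Ioo (-1:ℝ) 0,
      Tendsto (fun n : ℕ => (n:ℝ) * U (a n * y + b n)) atTop (𝓝 (|y| ^ α)))
    {q : ℕ → ℝ} {s : ℝ} (hs : s ∈ Set.Ioo (0:ℝ) 1)
    (hq : Tendsto (fun n : ℕ => (n:ℝ) * U (q n)) atTop (𝓝 s)) :
    Tendsto (fun n => (q n - b n) / a n) atTop (𝓝 (-(s ^ α⁻¹))) := by
  have hφ0 : 0 < s ^ α⁻¹ := Real.rpow_pos_of_pos hs.1 _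
  have hφ1 : s ^ α⁻¹ < 1 := Real.rpow_lt_one hs.1.le hs.2 (inv_pos.2 hα)
  rw [tendsto_order]
  constructor
  · intro c hc
    set y := (max c (-1) + -(s ^ α⁻¹)) / 2 with hy
    have hmax1 : (-1:ℝ) ≤ max c (-1) := le_max_right _ _
    have hmax2 : max c (-1) < -(s ^ α⁻¹) := max_lt hc (by linarith)
    have hy1 : -1 < y := by simp only [hy]; linarith
    have hy2 : y < -(s ^ α⁻¹) := by simp only [hy]; linarith
    have hy0 : y < 0 := by linarith
    have hyc : c < y := by
      have := le_max_left c (-1)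
      simp only [hy]; linarith
    have hyα : s < |y| ^ α := by
      have habs : s ^ α⁻¹ < |y| := by rw [abs_of_neg hy0]; linarith
      calc s = (s ^ α⁻¹) ^ α := (fe_rpow_inv_rpow hs.1.le hα).symm
        _ < |y| ^ α := Real.rpow_lt_rpow hφ0.le habs hα
    filter_upwards [fe_eventually_lt_of_tail hU hq (H y ⟨hy1, hy0⟩) hyα] with n hn
    have han := ha n
    rw [lt_div_iff₀ han]
    nlinarith
  · intro c hc
    set y := (-(s ^ α⁻¹) + min c 0) / 2 with hy
    have hmin1 : -(s ^ α⁻¹) < min c 0 := lt_min hc (by linarith)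
    have hmin2 : min c 0 ≤ c := min_le_left _ _
    have hy2 : -(s ^ α⁻¹) < y := by simp only [hy]; linarith
    have hy0 : y < 0 := by
      have := min_le_right c 0
      simp only [hy]; linarith
    have hy1 : -1 < y := by linarith
    have hyc : y < c := by simp only [hy]; linarith
    have hyα : |y| ^ α < s := by
      have habs : |y| < s ^ α⁻¹ := by rw [abs_of_neg hy0]; linarith
      calc |y| ^ α < (s ^ α⁻¹) ^ α := Real.rpow_lt_rpow (abs_nonneg y) habs hα
        _ = s := fe_rpow_inv_rpow hs.1.le hα
    filter_upwards [fe_eventually_lt_of_tail hU (H y ⟨hy1, hy0⟩) hq hyα] with n hn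
    have han := ha n
    rw [div_lt_iff₀ han]
    nlinarith

private lemma fe_nat_div_tendsto_atTop {k : ℕ} (hk : 1 ≤ k) :
    Tendsto (fun n : ℕ => n / k) atTop atTop := by
  apply tendsto_atTop_atTop.2
  intro bb
  refine ⟨k * bb, fun n hn => (Nat.le_div_iff_mul_le (by omega)).2 ?_⟩
  rwa [Nat.mul_comm] at hn

private lemma fe_ratio_tendsto {k : ℕ} (hk : 1 ≤ k) :
    Tendsto (fun n : ℕ => (n : ℝ) / ((n / k : ℕ) : ℝ)) atTop (𝓝 k) := by
  have hm := fe_nat_div_tendsto_atTop hk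
  have hinv : Tendsto (fun n : ℕ => (((n / k : ℕ) : ℝ))⁻¹) atTop (𝓝 0) :=
    tendsto_inv_atTop_nhds_zero_nat.comp hm
  have hupper : Tendsto (fun n : ℕ => (k : ℝ) + (k:ℝ) * (((n / k : ℕ) : ℝ))⁻¹) atTop
      (𝓝 ((k:ℝ) + (k:ℝ) * 0)) := tendsto_const_nhds.add (tendsto_const_nhds.mul hinv)
  rw [mul_zero, add_zero] at hupper
  apply tendsto_of_tendsto_of_tendsto_of_le_of_le' tendsto_const_nhds hupper
  · filter_upwards [hm.eventually_ge_atTop 1] with n hn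
    have hM : (0:ℝ) < ((n / k : ℕ) : ℝ) := by exact_mod_cast hn
    rw [le_div_iff₀ hM]
    have h0 : k * (n / k) ≤ n := by
      calc k * (n / k) = n / k * k := Nat.mul_comm _ _
        _ ≤ n := Nat.div_mul_le_self n k
    exact_mod_cast h0
  · filter_upwards [hm.eventually_ge_atTop 1] with n hn
    have hM : (0:ℝ) < ((n / k : ℕ) : ℝ) := by exact_mod_cast hn
    rw [div_le_iff₀ hM]
    have h1 : n ≤ k * (n / k) + k := by
      have h2 := Nat.div_add_mod n k
      have h3 : n % k < k := Nat.mod_lt n (by omega)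
      omega
    calc (n:ℝ) ≤ (k:ℝ) * ((n/k : ℕ):ℝ) + k := by exact_mod_cast h1
      _ = ((k:ℝ) + (k:ℝ) * (((n/k : ℕ):ℝ))⁻¹) * ((n/k : ℕ):ℝ) := by field_simp

/-- Rescaled tails along the subsequence `n / k`. -/
private lemma fe_tail_scaled {U : ℝ → ℝ} {a b : ℕ → ℝ} {α : ℝ}
    (H : ∀ y ∈ Set.Ioo (-1:ℝ) 0,
      Tendsto (fun n : ℕ => (n:ℝ) * U (a n * y + b n)) atTop (𝓝 (|y| ^ α)))
    {k : ℕ} (hk : 1 ≤ k) {t : ℝ} (ht : t ∈ Set.Ioo (-1:ℝ) 0) :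
    Tendsto (fun n : ℕ => (n:ℝ) * U (a (n / k) * t + b (n / k))) atTop
      (𝓝 ((k:ℝ) * |t| ^ α)) := by
  have hm := fe_nat_div_tendsto_atTop hk
  have hsub : Tendsto (fun n : ℕ => ((n / k : ℕ):ℝ) * U (a (n / k) * t + b (n / k))) atTop
      (𝓝 (|t| ^ α)) := (H t ht).comp hm
  have hmul := (fe_ratio_tendsto hk).mul hsub
  apply hmul.congr'
  filter_upwards [hm.eventually_ge_atTop 1] with n hn
  have hM : ((n / k : ℕ) : ℝ) ≠ 0 := by exact_mod_cast Nat.one_le_iff_ne_zero.1 hn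
  field_simp

private lemma fe_aux_rn {ts1 ts2 an am bn bm : ℝ} (han : an ≠ 0) (hts : ts1 - ts2 ≠ 0) :
    ((am * ts1 + bm - bn) / an - (am * ts2 + bm - bn) / an) * (ts1 - ts2)⁻¹ = am / an := by
  field_simp
  ring

private lemma fe_aux_dn {ts1 an am bn bm : ℝ} (han : an ≠ 0) :
    (am * ts1 + bm - bn) / an - am / an * ts1 = (bm - bn) / an := by
  field_simp
  ring

private lemma fe_aux_id {x an am bn bm : ℝ} (han : an ≠ 0) (ham : am ≠ 0) :
    an * x + bn = am * ((x - (bm - bn) / an) / (am / an)) + bm := by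
  field_simp
  ring

/-- Extension lemma. -/
private lemma fe_tail_extension {U : ℝ → ℝ} (hU : Antitone U) {a b : ℕ → ℝ} (ha : ∀ n, 0 < a n)
    {α : ℝ} (hα : 0 < α)
    (H : ∀ y ∈ Set.Ioo (-1:ℝ) 0,
      Tendsto (fun n : ℕ => (n:ℝ) * U (a n * y + b n)) atTop (𝓝 (|y| ^ α)))
    {x : ℝ} (hx : x < 0) :
    Tendsto (fun n : ℕ => (n:ℝ) * U (a n * x + b n)) atTop (𝓝 (|x| ^ α)) := by
  set lam := |x| ^ α with hlamdef
  have hlam : 0 < lam := Real.rpow_pos_of_pos (abs_pos.2 hx.ne) α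
  obtain ⟨k, hk⟩ := exists_nat_gt lam
  have hk1 : 1 ≤ k := by
    rcases Nat.eq_zero_or_pos k with h | h
    · subst h; norm_num at hk; linarith
    · exact h
  have hk0 : (0:ℝ) < k := hlam.trans hk
  set K := (k:ℝ) ^ α⁻¹ with hKdef
  have hK : 0 < K := Real.rpow_pos_of_pos hk0 _
  have hKα : K ^ α = k := fe_rpow_inv_rpow hk0.le hα
  have hmem : ∀ s : ℝ, s ∈ Set.Ioo (0:ℝ) 1 → -(s ^ α⁻¹ / K) ∈ Set.Ioo (-1:ℝ) 0 := by
    intro s hs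
    have h0 : 0 < s ^ α⁻¹ := Real.rpow_pos_of_pos hs.1 _
    have h1 : s ^ α⁻¹ < K := Real.rpow_lt_rpow hs.1.le
      (hs.2.trans_le (by exact_mod_cast hk1)) (inv_pos.2 hα)
    have h2 : s ^ α⁻¹ / K < 1 := (div_lt_one hK).2 h1
    have h3 : 0 < s ^ α⁻¹ / K := div_pos h0 hK
    exact ⟨by linarith, by linarith⟩
  have habsval : ∀ s : ℝ, 0 < s → (k:ℝ) * |(-(s ^ α⁻¹ / K))| ^ α = s := by
    intro s hs0
    have h0 : 0 < s ^ α⁻¹ := Real.rpow_pos_of_pos hs0 _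
    rw [abs_neg, abs_of_pos (div_pos h0 hK), Real.div_rpow (Real.rpow_nonneg hs0.le _) hK.le,
      fe_rpow_inv_rpow hs0.le hα, hKα]
    field_simp
  have hq1 : Tendsto (fun n : ℕ => (n:ℝ) * U (a (n/k) * (-(((1:ℝ)/4) ^ α⁻¹ / K)) + b (n/k)))
      atTop (𝓝 (1/4)) := by
    have := fe_tail_scaled H hk1 (hmem (1/4) (by norm_num))
    rwa [habsval (1/4) (by norm_num)] at this
  have hq2 : Tendsto (fun n : ℕ => (n:ℝ) * U (a (n/k) * (-(((1:ℝ)/2) ^ α⁻¹ / K)) + b (n/k)))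
      atTop (𝓝 (1/2)) := by
    have := fe_tail_scaled H hk1 (hmem (1/2) (by norm_num))
    rwa [habsval (1/2) (by norm_num)] at this
  have hC1 := fe_tendsto_loc hU ha hα H (by norm_num : (1/4:ℝ) ∈ Set.Ioo (0:ℝ) 1) hq1
  have hC2 := fe_tendsto_loc hU ha hα H (by norm_num : (1/2:ℝ) ∈ Set.Ioo (0:ℝ) 1) hq2
  set φ1 := ((1:ℝ)/4) ^ α⁻¹ with hφ1def
  set φ2 := ((1:ℝ)/2) ^ α⁻¹ with hφ2def
  have hφ1pos : 0 < φ1 := Real.rpow_pos_of_pos (by norm_num) _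
  have hφlt : φ1 < φ2 := Real.rpow_lt_rpow (by norm_num) (by norm_num) (inv_pos.2 hα)
  have hφne : φ2 - φ1 ≠ 0 := sub_ne_zero.2 hφlt.ne'
  have htsne : -(φ1 / K) - -(φ2 / K) ≠ 0 := by
    rw [show -(φ1/K) - -(φ2/K) = (φ2 - φ1)/K by ring]
    exact div_ne_zero hφne hK.ne'
  set rn := fun n : ℕ => a (n/k) / a n with hrndef
  set dn := fun n : ℕ => (b (n/k) - b n) / a n with hdndef
  have hrn : Tendsto rn atTop (𝓝 K) := by
    have hsub := (hC1.sub hC2).mul_const ((-(φ1 / K) - -(φ2 / K))⁻¹)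
    have hval : (-φ1 - -φ2) * (-(φ1 / K) - -(φ2 / K))⁻¹ = K := by
      rw [show -(φ1/K) - -(φ2/K) = (φ2 - φ1)/K by ring,
        show -φ1 - -φ2 = φ2 - φ1 by ring, inv_div, mul_comm]
      exact div_mul_cancel₀ K hφne
    rw [hval] at hsub
    apply hsub.congr
    intro n
    simp only [hrndef]
    exact fe_aux_rn (ha n).ne' htsne
  have hdn : Tendsto dn atTop (𝓝 0) := by
    have hsub := hC1.sub (hrn.mul_const (-(φ1 / K)))
    rw [show -φ1 - K * (-(φ1/K)) = 0 by field_simp; ring] at hsub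
    apply hsub.congr
    intro n
    simp only [hrndef, hdndef]
    exact fe_aux_dn (ha n).ne'
  have htn : Tendsto (fun n => (x - dn n) / rn n) atTop (𝓝 (x / K)) := by
    have h1 : Tendsto (fun n : ℕ => x - dn n) atTop (𝓝 (x - 0)) :=
      tendsto_const_nhds.sub hdn
    rw [sub_zero] at h1
    exact h1.div hrn hK.ne'
  set tstar := x / K with htstardef
  have hid : ∀ n : ℕ, a n * x + b n = a (n/k) * ((x - dn n) / rn n) + b (n/k) := by
    intro n
    simp only [hrndef, hdndef]
    exact fe_aux_id (ha n).ne' (ha (n/k)).ne'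
  have habs_t : |tstar| ^ α = lam / k := by
    rw [htstardef, abs_div, abs_of_pos hK, Real.div_rpow (abs_nonneg x) hK.le, hKα]
  have ht0 : tstar < 0 := div_neg_of_neg_of_pos hx hK
  have htabs1 : |tstar| < 1 := by
    by_contra hcon
    push_neg at hcon
    have h1 : (1:ℝ) ≤ |tstar| ^ α := by
      calc (1:ℝ) = 1 ^ α := (Real.one_rpow α).symm
        _ ≤ |tstar| ^ α := Real.rpow_le_rpow (by norm_num) hcon hα.le
    rw [habs_t, le_div_iff₀ hk0] at h1
    linarith
  have ht1 : -1 < tstar := (abs_lt.1 htabs1).1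
  rw [tendsto_order]
  constructor
  · -- c < lam
    intro c hc
    set c' := (max c 0 + lam) / 2 with hc'def
    have hmax0 : (0:ℝ) ≤ max c 0 := le_max_right _ _
    have hmaxlt : max c 0 < lam := max_lt hc hlam
    have hc'pos : 0 < c' := by simp only [hc'def]; linarith
    have hc'lam : c' < lam := by simp only [hc'def]; linarith
    have hcc' : c < c' := by
      have := le_max_left c 0
      simp only [hc'def]; linarith
    set θ := (c' / lam) ^ α⁻¹ with hθdef
    have hθ0 : 0 < θ := Real.rpow_pos_of_pos (div_pos hc'pos hlam) _
    have hθ1 : θ < 1 :=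
      Real.rpow_lt_one (div_pos hc'pos hlam).le ((div_lt_one hlam).2 hc'lam) (inv_pos.2 hα)
    set t2 := θ * tstar with ht2def
    have htt : tstar < t2 := by
      have h := mul_pos (sub_pos.2 hθ1) (neg_pos.2 ht0)
      have h2 : (1 - θ) * -tstar = θ * tstar - tstar := by ring
      rw [h2] at h
      rw [ht2def]
      linarith
    have ht20 : t2 < 0 := mul_neg_of_pos_of_neg hθ0 ht0
    have ht21 : (-1:ℝ) < t2 := lt_trans ht1 htt
    have hval : (k:ℝ) * |t2| ^ α = c' := by
      rw [ht2def, abs_mul, abs_of_pos hθ0, Real.mul_rpow hθ0.le (abs_nonneg _), hθdef,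
        fe_rpow_inv_rpow (div_pos hc'pos hlam).le hα, habs_t]
      field_simp
    have hqt : Tendsto (fun n : ℕ => (n:ℝ) * U (a (n/k) * t2 + b (n/k))) atTop (𝓝 c') := by
      have := fe_tail_scaled H hk1 (⟨ht21, ht20⟩ : t2 ∈ Set.Ioo (-1:ℝ) 0)
      rwa [hval] at this
    filter_upwards [htn.eventually_lt_const htt, hqt.eventually_const_lt hcc'] with n h1 h2
    rw [hid n]
    have harg : a (n/k) * ((x - dn n) / rn n) + b (n/k) ≤ a (n/k) * t2 + b (n/k) := by
      have h3 := mul_pos (ha (n/k)) (sub_pos.2 h1)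
      have h4 : a (n/k) * (t2 - (x - dn n) / rn n) =
          a (n/k) * t2 - a (n/k) * ((x - dn n) / rn n) := by ring
      rw [h4] at h3
      linarith
    calc c < (n:ℝ) * U (a (n/k) * t2 + b (n/k)) := h2
      _ ≤ (n:ℝ) * U (a (n/k) * ((x - dn n) / rn n) + b (n/k)) :=
        mul_le_mul_of_nonneg_left (hU harg) (Nat.cast_nonneg n)
  · -- lam < c
    intro c hc
    have hlamk : lam < min c k := lt_min hc hk
    set c' := (lam + min c k) / 2 with hc'def
    have hc'1 : lam < c' := by simp only [hc'def]; linarith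
    have hminc : min c (k:ℝ) ≤ c := min_le_left _ _
    have hmink : min c (k:ℝ) ≤ k := min_le_right _ _
    have hc'c : c' < c := by simp only [hc'def]; linarith
    have hc'k : c' < k := by simp only [hc'def]; linarith
    have hc'pos : 0 < c' := lt_trans hlam hc'1
    set θ := (c' / lam) ^ α⁻¹ with hθdef
    have hθ0 : 0 < θ := Real.rpow_pos_of_pos (div_pos hc'pos hlam) _
    have hθ1 : 1 < θ :=
      (Real.one_lt_rpow_iff_of_pos (div_pos hc'pos hlam)).2
        (Or.inl ⟨(one_lt_div hlam).2 hc'1, inv_pos.2 hα⟩)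
    set t2 := θ * tstar with ht2def
    have htt : t2 < tstar := by
      have h := mul_pos (sub_pos.2 hθ1) (neg_pos.2 ht0)
      have h2 : (θ - 1) * -tstar = -(θ * tstar) + tstar := by ring
      rw [h2] at h
      rw [ht2def]
      linarith
    have ht20 : t2 < 0 := lt_trans htt ht0
    have hval : (k:ℝ) * |t2| ^ α = c' := by
      rw [ht2def, abs_mul, abs_of_pos hθ0, Real.mul_rpow hθ0.le (abs_nonneg _), hθdef,
        fe_rpow_inv_rpow (div_pos hc'pos hlam).le hα, habs_t]
      field_simp
    have ht21 : (-1:ℝ) < t2 := by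
      have habs2 : |t2| < 1 := by
        by_contra hcon
        push_neg at hcon
        have h1 : (1:ℝ) ≤ |t2| ^ α := by
          calc (1:ℝ) = 1 ^ α := (Real.one_rpow α).symm
            _ ≤ |t2| ^ α := Real.rpow_le_rpow (by norm_num) hcon hα.le
        have h2 : (k:ℝ) ≤ k * |t2| ^ α := by nlinarith
        rw [hval] at h2
        linarith
      exact (abs_lt.1 habs2).1
    have hqt : Tendsto (fun n : ℕ => (n:ℝ) * U (a (n/k) * t2 + b (n/k))) atTop (𝓝 c') := by
      have := fe_tail_scaled H hk1 (⟨ht21, ht20⟩ : t2 ∈ Set.Ioo (-1:ℝ) 0)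
      rwa [hval] at this
    filter_upwards [htn.eventually_const_lt htt, hqt.eventually_lt_const hc'c] with n h1 h2
    rw [hid n]
    have harg : a (n/k) * t2 + b (n/k) ≤ a (n/k) * ((x - dn n) / rn n) + b (n/k) := by
      have h3 := mul_pos (ha (n/k)) (sub_pos.2 h1)
      have h4 : a (n/k) * ((x - dn n) / rn n - t2) =
          a (n/k) * ((x - dn n) / rn n) - a (n/k) * t2 := by ring
      rw [h4] at h3
      linarith
    calc (n:ℝ) * U (a (n/k) * ((x - dn n) / rn n) + b (n/k))
        ≤ (n:ℝ) * U (a (n/k) * t2 + b (n/k)) :=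
        mul_le_mul_of_nonneg_left (hU harg) (Nat.cast_nonneg n)
      _ < c := h2

/-- From free extremal convergence to a positive limit, extract tail convergence. -/
private lemma fe_free_to_tail {F : ℝ → ℝ} {c : ℕ → ℝ} {L : ℝ} (hL : 0 < L)
    (h : Tendsto (fun n => freePow F n (c n)) atTop (𝓝 L)) :
    Tendsto (fun n : ℕ => (n:ℝ) * (1 - F (c n))) atTop (𝓝 (1 - L)) := by
  have hev : ∀ᶠ n : ℕ in atTop,
      freePow F n (c n) = 1 - (n:ℝ) * (1 - F (c n)) := by
    filter_upwards [h.eventually_const_lt hL] with n hn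
    unfold freePow at hn ⊢
    rcases le_or_gt ((n:ℝ) * F (c n) - ((n:ℝ) - 1)) 0 with hle | hlt
    · rw [max_eq_right hle] at hn; exact absurd hn (lt_irrefl 0)
    · rw [max_eq_left hlt.le]; ring
  have h2 : Tendsto (fun n : ℕ => 1 - (n:ℝ) * (1 - F (c n))) atTop (𝓝 L) :=
    Tendsto.congr' hev h
  have h3 : Tendsto (fun n : ℕ => 1 - (1 - (n:ℝ) * (1 - F (c n)))) atTop (𝓝 (1 - L)) :=
    tendsto_const_nhds.sub h2
  apply h3.congr
  intro n
  ring

/-- From tail convergence to free extremal convergence. -/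
private lemma fe_tail_to_free {F : ℝ → ℝ} {c : ℕ → ℝ} {t : ℝ}
    (h : Tendsto (fun n : ℕ => (n:ℝ) * (1 - F (c n))) atTop (𝓝 t)) :
    Tendsto (fun n => freePow F n (c n)) atTop (𝓝 (max (1 - t) 0)) := by
  have h2 : Tendsto (fun n : ℕ => max (1 - (n:ℝ) * (1 - F (c n))) 0) atTop
      (𝓝 (max (1 - t) 0)) := (tendsto_const_nhds.sub h).max tendsto_const_nhds
  apply h2.congr
  intro n
  unfold freePow
  congr 1
  ring

end FreeExtremeAux

/-- The free max-domain of attraction of the Beta law `B_α` coincides with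
the classical max-domain of attraction of the Weibull law `Ψ_α`. -/
theorem freeDomAttr_beta_iff_classicalDomAttr_weibull
    (F : ℝ → ℝ) (hF : IsDistFun F) (α : ℝ) (hα : 0 < α) :
    (∃ a b : ℕ → ℝ, (∀ n, 0 < a n) ∧
        ∀ x : ℝ, Tendsto (fun n => freePow F n (a n * x + b n)) atTop
          (𝓝 (betaDF α x))) ↔
      (∃ a b : ℕ → ℝ, (∀ n, 0 < a n) ∧
        ∀ x : ℝ, Tendsto (fun n => F (a n * x + b n) ^ n) atTop
          (𝓝 (weibullDF α x))) := by
  obtain ⟨hmono, -, hbot, htop⟩ := hF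
  have hF1 : ∀ z, F z ≤ 1 := by
    intro z
    apply ge_of_tendsto htop
    filter_upwards [eventually_ge_atTop z] with y hy using hmono hy
  have hF0 : ∀ z, 0 ≤ F z := by
    intro z
    apply le_of_tendsto hbot
    filter_upwards [eventually_le_atBot z] with y hy using hmono hy
  have hUanti : Antitone (fun z : ℝ => 1 - F z) := fun u v huv => by
    simp only
    linarith [hmono huv]
  have hbeta_nonneg : ∀ x : ℝ, 0 ≤ x → betaDF α x = 1 := by
    intro x hx
    unfold betaDF
    rcases eq_or_lt_of_le hx with h | h
    · rw [if_neg (by linarith), if_pos (le_of_eq h.symm)]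
      rw [← h]
      simp [Real.zero_rpow hα.ne']
    · rw [if_neg (by linarith), if_neg (by linarith)]
  constructor
  · rintro ⟨a, b, ha, hconv⟩
    refine ⟨a, b, ha, fun x => ?_⟩
    -- tail convergence on (-1, 0)
    have key : ∀ y ∈ Set.Ioo (-1:ℝ) 0,
        Tendsto (fun n : ℕ => (n:ℝ) * (1 - F (a n * y + b n))) atTop (𝓝 (|y| ^ α)) := by
      intro y hy
      have hb : betaDF α y = 1 - |y| ^ α := by
        unfold betaDF
        rw [if_neg (by linarith [hy.1] : ¬ y ≤ -1), if_pos hy.2.le]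
      have h1 := hconv y
      rw [hb] at h1
      have hL : 0 < 1 - |y| ^ α := by
        have habs : |y| < 1 := abs_lt.2 ⟨hy.1, lt_trans hy.2 one_pos⟩
        have := Real.rpow_lt_one (abs_nonneg y) habs hα
        linarith
      have := fe_free_to_tail hL h1
      rw [show 1 - (1 - |y| ^ α) = |y| ^ α by ring] at this
      exact this
    have keyge : ∀ x : ℝ, 0 ≤ x →
        Tendsto (fun n : ℕ => (n:ℝ) * (1 - F (a n * x + b n))) atTop (𝓝 0) := by
      intro x hx
      have h1 := hconv x
      rw [hbeta_nonneg x hx] at h1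
      have := fe_free_to_tail one_pos h1
      rw [show (1:ℝ) - 1 = 0 by ring] at this
      exact this
    rcases lt_trichotomy x 0 with hx | hx | hx
    · have htail := fe_tail_extension hUanti ha hα key hx
      have hw : weibullDF α x = Real.exp (-(|x| ^ α)) := by
        unfold weibullDF; rw [if_pos hx.le]
      rw [hw]
      have hpow := fe_pow_one_sub_tendsto_exp
        (u := fun n => 1 - F (a n * x + b n)) (fun n => by show (0:ℝ) ≤ 1 - F (a n * x + b n); linarith [hF1 (a n * x + b n)])
        htail
      apply hpow.congr
      intro n
      simp only [sub_sub_cancel]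
    · subst hx
      have htail := keyge 0 le_rfl
      have hw : weibullDF α 0 = Real.exp (-0) := by
        unfold weibullDF
        rw [if_pos le_rfl, abs_zero, Real.zero_rpow hα.ne']
      rw [hw]
      have hpow := fe_pow_one_sub_tendsto_exp
        (u := fun n => 1 - F (a n * 0 + b n)) (fun n => by show (0:ℝ) ≤ 1 - F (a n * 0 + b n); linarith [hF1 (a n * 0 + b n)])
        htail
      apply hpow.congr
      intro n
      simp only [sub_sub_cancel]
    · have htail := keyge x hx.le
      have hw : weibullDF α x = Real.exp (-0) := by
        unfold weibullDF
        rw [if_neg (not_le.2 hx), ← Real.exp_zero, neg_zero]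
      rw [hw]
      have hpow := fe_pow_one_sub_tendsto_exp
        (u := fun n => 1 - F (a n * x + b n)) (fun n => by show (0:ℝ) ≤ 1 - F (a n * x + b n); linarith [hF1 (a n * x + b n)])
        htail
      apply hpow.congr
      intro n
      simp only [sub_sub_cancel]
  · rintro ⟨a, b, ha, hconv⟩
    refine ⟨a, b, ha, fun x => ?_⟩
    rcases le_or_gt x 0 with hx | hx
    · have hw : weibullDF α x = Real.exp (-(|x| ^ α)) := by
        unfold weibullDF; rw [if_pos hx]
      have h1 := hconv x
      rw [hw] at h1
      have htail := fe_mul_one_sub_tendsto_of_pow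
        (G := fun n => F (a n * x + b n)) (fun n => hF0 _) (fun n => hF1 _) h1
        (Real.exp_pos _)
      rw [Real.log_exp, neg_neg] at htail
      have hfree := fe_tail_to_free htail
      have hb : betaDF α x = max (1 - |x| ^ α) 0 := by
        unfold betaDF
        rcases le_or_gt x (-1) with h | h
        · rw [if_pos h]
          have habs : (1:ℝ) ≤ |x| := by
            rw [abs_of_nonpos hx]; linarith
          have h2 : (1:ℝ) ≤ |x| ^ α := by
            calc (1:ℝ) = 1 ^ α := (Real.one_rpow α).symm
              _ ≤ |x| ^ α := Real.rpow_le_rpow (by norm_num) habs hα.le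
          rw [max_eq_right (by linarith)]
        · rw [if_neg (not_le.2 h), if_pos hx]
          have habs : |x| ≤ 1 := by
            rw [abs_of_nonpos hx]; linarith
          have h2 : |x| ^ α ≤ 1 := by
            calc |x| ^ α ≤ 1 ^ α := Real.rpow_le_rpow (abs_nonneg x) habs hα.le
              _ = 1 := Real.one_rpow α
          rw [max_eq_left (by linarith)]
      rw [hb]
      exact hfree
    · have hw : weibullDF α x = 1 := by
        unfold weibullDF; rw [if_neg (not_le.2 hx)]
      have h1 := hconv x
      rw [hw] at h1
      have htail := fe_mul_one_sub_tendsto_of_pow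
        (G := fun n => F (a n * x + b n)) (fun n => hF0 _) (fun n => hF1 _) h1 one_pos
      rw [Real.log_one, neg_zero] at htail
      have hfree := fe_tail_to_free htail
      have hb : betaDF α x = max (1 - 0) 0 := by
        rw [hbeta_nonneg x hx.le]
        norm_num
      rw [hb]
      exact hfree
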